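/- Let G₁ and G₂ be finite connected simple graphs, each with hyperbolicity 0 (i.e., for all vertices x, y, u, v of G_i, d(x,y) + d(u,v) ≤ max(d(x,u) + d(y,v), d(x,v) + d(y,u))), and let D₁ and D₂ be their diameters. Then the hyperbolicity of the Cartesian (box) product G₁ □ G₂ equals min(D₁, D₂): every quadruple of vertices x, y, u, v of G₁ □ G₂ satisfies d(x,y) + d(u,v) ≤ max(d(x,u) + d(y,v), d(x,v) + d(y,u)) + 2·min(D₁, D₂), and some quadruple attains equality. -/

import Mathlib

open SimpleGraph

lemma walk_length_lb {V₁ V₂ : Type*} {G₁ : SimpleGraph V₁} {G₂ : SimpleGraph V₂}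
    (hG₁ : G₁.Connected) (hG₂ : G₂.Connected) {x y : V₁ × V₂}
    (p : (G₁.boxProd G₂).Walk x y) :
    G₁.dist x.1 y.1 + G₂.dist x.2 y.2 ≤ p.length := by
  induction p with
  | nil => simp
  | cons h p ih =>
    rename_i a c z
    rw [SimpleGraph.Walk.length_cons]
    rcases h with ⟨h1, h2⟩ | ⟨h2, h1⟩
    · have : G₁.dist a.1 z.1 ≤ 1 + G₁.dist c.1 z.1 := by
        have := hG₁.dist_triangle (u := a.1) (v := c.1) (w := z.1)
        rwa [(SimpleGraph.dist_eq_one_iff_adj.2 h1)] at this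
      rw [h2]; omega
    · have : G₂.dist a.2 z.2 ≤ 1 + G₂.dist c.2 z.2 := by
        have := hG₂.dist_triangle (u := a.2) (v := c.2) (w := z.2)
        rwa [(SimpleGraph.dist_eq_one_iff_adj.2 h2)] at this
      rw [h1]; omega

lemma boxProd_dist_eq {V₁ V₂ : Type*} {G₁ : SimpleGraph V₁} {G₂ : SimpleGraph V₂}
    (hG₁ : G₁.Connected) (hG₂ : G₂.Connected) (x y : V₁ × V₂) :
    (G₁.boxProd G₂).dist x y = G₁.dist x.1 y.1 + G₂.dist x.2 y.2 := by
  apply le_antisymm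
  · obtain ⟨w₁, hw₁⟩ := hG₁.exists_walk_length_eq_dist x.1 y.1
    obtain ⟨w₂, hw₂⟩ := hG₂.exists_walk_length_eq_dist x.2 y.2
    have := SimpleGraph.dist_le ((w₁.boxProdLeft G₂ x.2).append (w₂.boxProdRight G₁ y.1))
    have l1 : (w₁.boxProdLeft G₂ x.2).length = w₁.length := SimpleGraph.Walk.length_map _ _
    have l2 : (w₂.boxProdRight G₁ y.1).length = w₂.length := SimpleGraph.Walk.length_map _ _
    rw [SimpleGraph.Walk.length_append, l1, l2, hw₁, hw₂] at this
    simpa using this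
  · obtain ⟨p, hp⟩ := (hG₁.boxProd hG₂).exists_walk_length_eq_dist x y
    rw [← hp]
    exact walk_length_lb hG₁ hG₂ p

theorem boxProd_hyperbolicity {V₁ V₂ : Type*} [Fintype V₁] [Fintype V₂]
    (G₁ : SimpleGraph V₁) (G₂ : SimpleGraph V₂)
    (hG₁ : G₁.Connected) (hG₂ : G₂.Connected)
    (h₁ : ∀ x y u v : V₁,
      G₁.dist x y + G₁.dist u v ≤
        max (G₁.dist x u + G₁.dist y v) (G₁.dist x v + G₁.dist y u))
    (h₂ : ∀ x y u v : V₂,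
      G₂.dist x y + G₂.dist u v ≤
        max (G₂.dist x u + G₂.dist y v) (G₂.dist x v + G₂.dist y u))
    (D₁ D₂ : ℕ)
    (hD₁ : (∀ x y : V₁, G₁.dist x y ≤ D₁) ∧ ∃ x y : V₁, G₁.dist x y = D₁)
    (hD₂ : (∀ x y : V₂, G₂.dist x y ≤ D₂) ∧ ∃ x y : V₂, G₂.dist x y = D₂) :
    (∀ x y u v : V₁ × V₂,
      (G₁.boxProd G₂).dist x y + (G₁.boxProd G₂).dist u v ≤
        max ((G₁.boxProd G₂).dist x u + (G₁.boxProd G₂).dist y v)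
          ((G₁.boxProd G₂).dist x v + (G₁.boxProd G₂).dist y u) + 2 * min D₁ D₂) ∧
    (∃ x y u v : V₁ × V₂,
      (G₁.boxProd G₂).dist x y + (G₁.boxProd G₂).dist u v =
        max ((G₁.boxProd G₂).dist x u + (G₁.boxProd G₂).dist y v)
          ((G₁.boxProd G₂).dist x v + (G₁.boxProd G₂).dist y u) + 2 * min D₁ D₂) := by
  constructor
  · intro x y u v
    simp only [boxProd_dist_eq hG₁ hG₂]
    have hA1 := h₁ x.1 y.1 u.1 v.1
    have hA2 := h₂ x.2 y.2 u.2 v.2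
    have b1 := hD₁.1 x.1 u.1
    have b2 := hD₁.1 y.1 v.1
    have b3 := hD₁.1 x.1 v.1
    have b4 := hD₁.1 y.1 u.1
    have c1 := hD₂.1 x.2 u.2
    have c2 := hD₂.1 y.2 v.2
    have c3 := hD₂.1 x.2 v.2
    have c4 := hD₂.1 y.2 u.2
    omega
  · obtain ⟨-, a, b, hab⟩ := hD₁
    obtain ⟨-, c, d, hcd⟩ := hD₂
    refine ⟨(a, c), (b, d), (a, d), (b, c), ?_⟩
    have e1 : G₁.dist b a = D₁ := by rw [SimpleGraph.dist_comm]; exact hab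
    have e2 : G₂.dist d c = D₂ := by rw [SimpleGraph.dist_comm]; exact hcd
    simp only [boxProd_dist_eq hG₁ hG₂, SimpleGraph.dist_self, hab, hcd, e1, e2]
    omega
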